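/- arXiv:2302.08211 — 2 statements merged into one kernel-verified Lean document; each statement's English description precedes it below -/
import Mathlib

section
/- Let μ = (μ_1,...,μ_n) be a composition, and for m ≥ 0 and 1 ≤ i ≤ n+m set α_μ^{(m)}(i) = q^{(μ*0^m)_i} t^{1 - β_{μ*0^m}(i)}. Then the sequence t^{n+m} α_μ^{(m)}(i) converges in the t-adic topology on Q(q,t) as m → ∞, with limit: q^{μ_i} t^{n+1-β_μ(i)} if i ≤ n and μ_i ≠ 0, and 0 otherwise (i.e., if i ≤ n with μ_i = 0, or if i > n). -/
open scoped Multiplicative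
open scoped WithZero
/-- `β_ν(i)`, 0-indexed. -/
def betaComp (N : ℕ) (ν : ℕ → ℕ) (i : ℕ) : ℕ :=
  ((Finset.range N).filter (fun j => j ≤ i ∧ ν j ≤ ν i)).card +
    ((Finset.range N).filter (fun j => i < j ∧ ν j < ν i)).card

/-- The field `ℚ(q,t)`, realized as rational functions in `t` over `ℚ(q)`. -/
abbrev Kqt : Type := RatFunc (RatFunc ℚ)

/-- The variable `q` of `ℚ(q,t)`. -/
noncomputable def qq : Kqt := RatFunc.C RatFunc.X

/-- The variable `t` of `ℚ(q,t)`. -/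
noncomputable def tt : Kqt := RatFunc.X

/-- The `t`-adic valuation on `ℚ(q,t)` (valued in `ℤₘ₀`); `v(t) = ofAdd (-1)`. -/
noncomputable def tVal : Valuation Kqt ℤᵐ⁰ :=
  (Polynomial.idealX (RatFunc ℚ)).valuation Kqt

lemma tt_ne_zero' : tt ≠ 0 := RatFunc.X_ne_zero

lemma qq_ne_zero' : qq ≠ 0 := by
  simpa [qq] using RatFunc.X_ne_zero (K := ℚ)

lemma tVal_tt' : tVal tt = Multiplicative.ofAdd (-1 : ℤ) :=
  Polynomial.valuation_X_eq_neg_one (RatFunc ℚ)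

lemma tVal_qq' : tVal qq = 1 := by
  have h1 : tVal qq ≤ 1 := by
    rw [qq, ← RatFunc.algebraMap_C]
    exact (Polynomial.idealX (RatFunc ℚ)).valuation_le_one _
  have h2 : tVal qq⁻¹ ≤ 1 := by
    have : (qq : Kqt)⁻¹ = RatFunc.C ((RatFunc.X : RatFunc ℚ))⁻¹ := by
      rw [qq, ← map_inv₀]
    rw [this, ← RatFunc.algebraMap_C]
    exact (Polynomial.idealX (RatFunc ℚ)).valuation_le_one _
  have hmul : tVal qq * tVal qq⁻¹ = 1 := by
    rw [← map_mul, mul_inv_cancel₀ qq_ne_zero', map_one]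
  refine le_antisymm h1 ?_
  calc (1 : ℤᵐ⁰) = tVal qq * tVal qq⁻¹ := hmul.symm
    _ ≤ tVal qq * 1 := mul_le_mul_right h2 _
    _ = tVal qq := mul_one _

lemma tVal_mono' (a : ℕ) (k : ℤ) : tVal (qq ^ a * tt ^ k) = Multiplicative.ofAdd (-k) := by
  rw [map_mul, map_pow, map_zpow₀, tVal_qq', tVal_tt', one_pow, one_mul,
    ← WithZero.coe_zpow, ← ofAdd_zsmul]
  norm_num

lemma beta_shift' (n m i : ℕ) (μ : ℕ → ℕ) (hμ : ∀ j, n ≤ j → μ j = 0) (hi : i < n)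
    (hne : μ i ≠ 0) : betaComp (n + m) μ i = betaComp n μ i + m := by
  unfold betaComp
  have hr : Finset.range (n + m) = Finset.range n ∪ Finset.Ico n (n + m) := by
    ext j
    simp [Finset.mem_Ico, Finset.mem_union]
    omega
  have hd : Disjoint (Finset.range n) (Finset.Ico n (n + m)) := by
    simp [Finset.disjoint_left, Finset.mem_Ico]
    omega
  rw [hr, Finset.filter_union, Finset.filter_union,
    Finset.card_union_of_disjoint (hd.mono (Finset.filter_subset _ _) (Finset.filter_subset _ _)),
    Finset.card_union_of_disjoint (hd.mono (Finset.filter_subset _ _) (Finset.filter_subset _ _))]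
  have h1 : (Finset.Ico n (n + m)).filter (fun j => j ≤ i ∧ μ j ≤ μ i) = ∅ := by
    apply Finset.filter_false_of_mem
    intro j hj
    simp only [Finset.mem_Ico] at hj
    omega
  have h2 : (Finset.Ico n (n + m)).filter (fun j => i < j ∧ μ j < μ i) = Finset.Ico n (n + m) := by
    apply Finset.filter_true_of_mem
    intro j hj
    simp only [Finset.mem_Ico] at hj
    have := hμ j hj.1
    omega
  rw [h1, h2, Finset.card_empty, Nat.card_Ico]
  ring_nf
  omega

lemma beta_bound' (n m i : ℕ) (μ : ℕ → ℕ) (h0 : μ i = 0) : betaComp (n + m) μ i ≤ i + 1 := by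
  unfold betaComp
  have h2 : (Finset.range (n + m)).filter (fun j => i < j ∧ μ j < μ i) = ∅ := by
    apply Finset.filter_false_of_mem
    intro j _
    omega
  rw [h2, Finset.card_empty, add_zero]
  calc ((Finset.range (n + m)).filter (fun j => j ≤ i ∧ μ j ≤ μ i)).card
      ≤ (Finset.range (i + 1)).card := by
        apply Finset.card_le_card
        intro j hj
        simp only [Finset.mem_filter, Finset.mem_range] at *
        omega
    _ = i + 1 := Finset.card_range _

lemma combine_pows' (a : ℕ) (N : ℕ) (e : ℤ) :
    tt ^ N * (qq ^ a * tt ^ e) = qq ^ a * tt ^ ((N : ℤ) + e) := by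
  rw [← zpow_natCast tt N, mul_left_comm, ← zpow_add₀ tt_ne_zero']

/-- Let `μ` be a composition of length `n`, encoded as `μ : ℕ → ℕ` vanishing at
indices `≥ n` (so the same function encodes each `μ * 0ᵐ`).  For each index `i` (0-indexed)
set `α_μ⁽ᵐ⁾(i) = q^{(μ*0ᵐ)_i} t^{1 - β_{μ*0ᵐ}(i)}`.  Then `t^{n+m} α_μ⁽ᵐ⁾(i)` converges in
the `t`-adic topology as `m → ∞`, with limit `q^{μ_i} t^{n+1-β_μ(i)}` if `i < n` and
`μ_i ≠ 0`, and limit `0` otherwise. -/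
theorem tadic_limit_of_cherednik_weights
    (n : ℕ) (μ : ℕ → ℕ) (hμ : ∀ j, n ≤ j → μ j = 0) (i : ℕ) :
    ∀ γ : ℤᵐ⁰, γ ≠ 0 → ∃ M : ℕ, ∀ m ≥ M,
      tVal ((tt ^ (n + m) * (qq ^ μ i * tt ^ ((1 : ℤ) - betaComp (n + m) μ i))) -
        (if i < n ∧ μ i ≠ 0 then qq ^ μ i * tt ^ ((n : ℤ) + 1 - betaComp n μ i) else 0)) < γ := by
  intro γ hγ
  by_cases hc : i < n ∧ μ i ≠ 0
  · refine ⟨0, fun m _ => ?_⟩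
    rw [if_pos hc]
    have heq : tt ^ (n + m) * (qq ^ μ i * tt ^ ((1 : ℤ) - betaComp (n + m) μ i)) =
        qq ^ μ i * tt ^ ((n : ℤ) + 1 - betaComp n μ i) := by
      rw [combine_pows', beta_shift' n m i μ hμ hc.1 hc.2]
      congr 1
      push_cast
      ring
    rw [heq, sub_self, map_zero]
    exact zero_lt_iff.mpr hγ
  · have h0 : μ i = 0 := by
      rcases Nat.lt_or_ge i n with h | h
      · by_contra h'
        exact hc ⟨h, h'⟩
      · exact hμ i h
    rcases WithZero.ne_zero_iff_exists.mp hγ with ⟨g, rfl⟩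
    refine ⟨i + 2 + (Multiplicative.toAdd g).natAbs, fun m hm => ?_⟩
    rw [if_neg hc, sub_zero, combine_pows', tVal_mono', ← ofAdd_toAdd g,
      WithZero.coe_lt_coe, Multiplicative.ofAdd_lt]
    have hβ : (betaComp (n + m) μ i : ℤ) ≤ (i : ℤ) + 1 := by
      exact_mod_cast beta_bound' n m i μ h0
    have hm' : (i : ℤ) + 2 + (Multiplicative.toAdd g).natAbs ≤ (m : ℤ) := by
      exact_mod_cast hm
    omega
end

section
/- In the double affine Hecke algebra H_n, the element ω_n = T_{n-1}^{-1}···T_1^{-1}Y_1^{-1} satisfies ω_n^{-1} T_{n-1}^{-1}···T_r^{-1} X_r = q t^{-(n-r)} X_1 ω_n^{-1} T_{n-1}···T_r for 1 ≤ r ≤ n-1. -/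
/-- `T r T (r+1) ⋯ T (n-1)` (ascending product), as a unit. -/
def ascT {A : Type*} [Monoid A] (T : ℕ → Aˣ) (r n : ℕ) : Aˣ :=
  ((List.range' r (n - r)).map T).prod

/-- `T (n-1) ⋯ T (r+1) T r` (descending product), as a unit. -/
def descT {A : Type*} [Monoid A] (T : ℕ → Aˣ) (r n : ℕ) : Aˣ :=
  ((List.range' r (n - r)).map T).reverse.prod

namespace DahaAux

variable {A : Type*} [Monoid A] (T : ℕ → Aˣ)

lemma ascT_same (r : ℕ) : ascT T r r = 1 := by simp [ascT]

lemma descT_same (r : ℕ) : descT T r r = 1 := by simp [descT]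

lemma ascT_split (r m n : ℕ) (h1 : r ≤ m) (h2 : m ≤ n) :
    ascT T r n = ascT T r m * ascT T m n := by
  unfold ascT
  rw [← List.prod_append, ← List.map_append]
  have h3 : List.range' r (m - r) ++ List.range' m (n - m) = List.range' r (n - r) := by
    have := @List.range'_append r (m - r) (n - m) 1
    simp only [one_mul] at this
    rw [show r + (m - r) = m by omega] at this
    rw [this]
    congr 1
    omega
  rw [h3]

lemma descT_split (r m n : ℕ) (h1 : r ≤ m) (h2 : m ≤ n) :
    descT T r n = descT T m n * descT T r m := by
  unfold descT
  rw [← List.prod_append, ← List.reverse_append, ← List.map_append]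
  have h3 : List.range' r (m - r) ++ List.range' m (n - m) = List.range' r (n - r) := by
    have := @List.range'_append r (m - r) (n - m) 1
    simp only [one_mul] at this
    rw [show r + (m - r) = m by omega] at this
    rw [this]
    congr 1
    omega
  rw [h3]

lemma ascT_single (b : ℕ) : ascT T b (b + 1) = T b := by simp [ascT]

lemma descT_single (b : ℕ) : descT T b (b + 1) = T b := by simp [descT]

lemma ascT_succ (r b : ℕ) (h : r ≤ b) : ascT T r (b + 1) = ascT T r b * T b := by
  rw [ascT_split T r b (b + 1) h (Nat.le_succ b), ascT_single]

lemma descT_succ (r b : ℕ) (h : r ≤ b) : descT T r (b + 1) = T b * descT T r b := by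
  rw [descT_split T r b (b + 1) h (Nat.le_succ b), descT_single]

/-- `X 2 * X 3 * ⋯ * X m`, as a unit. -/
def Vx (X : ℕ → Aˣ) (m : ℕ) : Aˣ := ((List.range' 2 (m - 1)).map X).prod

/-- `(T m)⁻¹ ⋯ (T 2)⁻¹ * (T 1)² * T 2 ⋯ T m`. -/
def Cx (m : ℕ) : Aˣ := (ascT T 2 (m + 1))⁻¹ * (T 1 * T 1) * ascT T 2 (m + 1)

/-- `(T 1)⁻¹ ⋯ (T (m-1))⁻¹ * (T m)² * T (m-1) ⋯ T 1`. -/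
def Dx (m : ℕ) : Aˣ := (descT T 1 m)⁻¹ * (T m * T m) * descT T 1 m

lemma Vx_succ (X : ℕ → Aˣ) (m : ℕ) (h : 1 ≤ m) : Vx X (m + 1) = Vx X m * X (m + 1) := by
  unfold Vx
  rw [show m + 1 - 1 = (m - 1) + 1 by omega, List.range'_concat]
  rw [show 2 + 1 * (m - 1) = m + 1 by omega]
  simp

lemma Vx_one (X : ℕ → Aˣ) : Vx X 1 = 1 := by simp [Vx]

lemma Vx_two (X : ℕ → Aˣ) : Vx X 2 = X 2 := by simp [Vx]

lemma Cx_one : Cx T 1 = T 1 * T 1 := by simp [Cx, ascT_same]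

lemma Cx_succ (m : ℕ) (h : 1 ≤ m) : Cx T (m + 1) = (T (m + 1))⁻¹ * Cx T m * T (m + 1) := by
  unfold Cx
  rw [ascT_succ T 2 (m + 1) (by omega)]
  rw [mul_inv_rev]
  group

lemma Dx_one : Dx T 1 = T 1 * T 1 := by simp [Dx, descT_same]

lemma coe_list_prod {A : Type*} [Monoid A] (X : ℕ → Aˣ) (l : List ℕ) :
    (((l.map X).prod : Aˣ) : A) = (l.map (fun i => (X i : A))).prod := by
  induction l with
  | nil => simp
  | cons a l ih => simp [ih]

end DahaAux

open DahaAux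

/-- In the double affine Hecke algebra `H_n` (here: any algebra `A` over a
field `K` ∋ `q, t`, `t ≠ 0`, with invertible elements `T 1, …, T (n-1)`, `X 1, …, X n`,
`Y 1, …, Y n` satisfying the DAHA relations), the element
`ω_n = T (n-1)⁻¹ ⋯ T 1⁻¹ Y 1⁻¹` satisfies, for `1 ≤ r ≤ n-1`,
`ω_n⁻¹ T (n-1)⁻¹ ⋯ T r⁻¹ X r = q t^{-(n-r)} X 1 ω_n⁻¹ T (n-1) ⋯ T r`.
(Note `ω_n⁻¹ = Y 1 · T 1 ⋯ T (n-1)` and `T (n-1)⁻¹ ⋯ T r⁻¹ = (T r ⋯ T (n-1))⁻¹`.) -/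
theorem daha_omega_cross_relation
    {K : Type*} [Field K] {A : Type*} [Ring A] [Algebra K A]
    (q t : K) (ht : t ≠ 0) (n : ℕ) (hn : 2 ≤ n)
    (T X Y : ℕ → Aˣ)
    -- (i): quadratic, braid, and distant-commutation relations for the `T i`
    (hquad : ∀ i, 1 ≤ i → i ≤ n - 1 →
      ((T i : A) - 1) * ((T i : A) + algebraMap K A t) = 0)
    (hbraid : ∀ i, 1 ≤ i → i + 1 ≤ n - 1 →
      (T i : A) * (T (i + 1) : A) * (T i : A) = (T (i + 1) : A) * (T i : A) * (T (i + 1) : A))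
    (hTT : ∀ i j, 1 ≤ i → i ≤ n - 1 → 1 ≤ j → j ≤ n - 1 → i + 1 < j →
      Commute (T i : A) (T j : A))
    -- (ii): relations between the `T i` and the `X j`
    (hTXT : ∀ i, 1 ≤ i → i ≤ n - 1 →
      (↑(T i)⁻¹ : A) * (X i : A) * (↑(T i)⁻¹ : A) = t⁻¹ • (X (i + 1) : A))
    (hTX : ∀ i j, 1 ≤ i → i ≤ n - 1 → 1 ≤ j → j ≤ n → j ≠ i → j ≠ i + 1 →
      Commute (T i : A) (X j : A))
    (hXX : ∀ i j, Commute (X i : A) (X j : A))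
    -- (iii): relations between the `T i` and the `Y j`
    (hTYT : ∀ i, 1 ≤ i → i ≤ n - 1 →
      (T i : A) * (Y i : A) * (T i : A) = t • (Y (i + 1) : A))
    (hTY : ∀ i j, 1 ≤ i → i ≤ n - 1 → 1 ≤ j → j ≤ n → j ≠ i → j ≠ i + 1 →
      Commute (T i : A) (Y j : A))
    (hYY : ∀ i j, Commute (Y i : A) (Y j : A))
    -- (iv)
    (hXY : (Y 1 : A) * (T 1 : A) * (X 1 : A) = (X 2 : A) * (Y 1 : A) * (T 1 : A))
    -- (v)
    (hYX : (Y 1 : A) * ((List.range' 1 n).map (fun i => (X i : A))).prod =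
      q • (((List.range' 1 n).map (fun i => (X i : A))).prod * (Y 1 : A)))
    (r : ℕ) (hr1 : 1 ≤ r) (hr2 : r ≤ n - 1) :
    ((Y 1 * ascT T 1 n : Aˣ) : A) * ((ascT T r n)⁻¹ : Aˣ) * (X r : A) =
      (q * t⁻¹ ^ (n - r)) •
        ((X 1 : A) * ((Y 1 * ascT T 1 n : Aˣ) : A) * (descT T r n : A)) := by
  -- ## Basic consequences of the relations
  have cancelu : ∀ (u : Aˣ) (a b : A), a * u = b * u → a = b := by
    intro u a b h
    have := congrArg (fun z => z * (↑u⁻¹ : A)) h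
    simpa [Units.mul_inv_cancel_right] using this
  have hXsucc : ∀ i, 1 ≤ i → i ≤ n - 1 →
      (X (i + 1) : A) = t • ((↑(T i)⁻¹ : A) * ((X i : A) * (↑(T i)⁻¹ : A))) := by
    intro i h1 h2
    have h := hTXT i h1 h2
    rw [mul_assoc] at h
    rw [h, smul_smul, mul_inv_cancel₀ ht, one_smul]
  have E1 : ∀ i, 1 ≤ i → i ≤ n - 1 →
      (T i : A) * (X (i + 1) : A) = t • ((X i : A) * (↑(T i)⁻¹ : A)) := by
    intro i h1 h2
    rw [hXsucc i h1 h2, mul_smul_comm]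
    congr 1
    simp only [← mul_assoc]
    simp [mul_assoc, Units.mul_inv_cancel_left]
  have E2 : ∀ i, 1 ≤ i → i ≤ n - 1 →
      (X (i + 1) : A) * (T i : A) = t • ((↑(T i)⁻¹ : A) * (X i : A)) := by
    intro i h1 h2
    rw [hXsucc i h1 h2, smul_mul_assoc]
    congr 1
    simp [mul_assoc, Units.inv_mul_cancel_left]
  have E1inv : ∀ i, 1 ≤ i → i ≤ n - 1 →
      (X i : A) * (↑(T i)⁻¹ : A) = t⁻¹ • ((T i : A) * (X (i + 1) : A)) := by
    intro i h1 h2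
    rw [E1 i h1 h2, smul_smul, inv_mul_cancel₀ ht, one_smul]
  have hTXTp : ∀ i, 1 ≤ i → i ≤ n - 1 →
      (↑(T i)⁻¹ : A) * (X i : A) * (↑(T i)⁻¹ : A) = t⁻¹ • (X (i + 1) : A) := hTXT
  -- coercion of a unit equation
  have coeEq : ∀ {u v : Aˣ}, u = v → (u : A) = (v : A) := fun h => by rw [h]
  -- lifted commutation relations in `Aˣ`
  have cTTU : ∀ i j, 1 ≤ i → i ≤ n - 1 → 1 ≤ j → j ≤ n - 1 → i + 1 < j →
      Commute (T i) (T j) := by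
    intro i j h1 h2 h3 h4 h5
    exact Units.ext (by simpa using (hTT i j h1 h2 h3 h4 h5).eq)
  have cTXU : ∀ i j, 1 ≤ i → i ≤ n - 1 → 1 ≤ j → j ≤ n → j ≠ i → j ≠ i + 1 →
      Commute (T i) (X j) := by
    intro i j h1 h2 h3 h4 h5 h6
    exact Units.ext (by simpa using (hTX i j h1 h2 h3 h4 h5 h6).eq)
  have cYTU : ∀ i, 2 ≤ i → i ≤ n - 1 → Commute (Y 1) (T i) := by
    intro i h1 h2
    exact Units.ext (by simpa using
      ((hTY i 1 (by omega) h2 le_rfl (by omega) (by omega) (by omega)).symm).eq)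
  -- commuting with ascending/descending products
  have cAsc : ∀ (u : Aˣ) (a b : ℕ), (∀ i, a ≤ i → i < b → Commute u (T i)) →
      Commute u (ascT T a b) := by
    intro u a b h
    unfold ascT
    apply Commute.list_prod_right
    intro x hx
    obtain ⟨i, hi, rfl⟩ := List.mem_map.1 hx
    have hm := List.mem_range'_1.1 hi
    exact h i hm.1 (by omega)
  have cDesc : ∀ (u : Aˣ) (a b : ℕ), (∀ i, a ≤ i → i < b → Commute u (T i)) →
      Commute u (descT T a b) := by
    intro u a b h
    unfold descT
    apply Commute.list_prod_right
    intro x hx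
    rw [List.mem_reverse] at hx
    obtain ⟨i, hi, rfl⟩ := List.mem_map.1 hx
    have hm := List.mem_range'_1.1 hi
    exact h i hm.1 (by omega)
  have cVx : ∀ (u : Aˣ) (m : ℕ), (∀ j, 2 ≤ j → j ≤ m → Commute u (X j)) →
      Commute u (Vx X m) := by
    intro u m h
    unfold Vx
    apply Commute.list_prod_right
    intro x hx
    obtain ⟨i, hi, rfl⟩ := List.mem_map.1 hx
    have hm := List.mem_range'_1.1 hi
    exact h i hm.1 (by omega)
  -- ## braid consequences
  have brU : ∀ i, 1 ≤ i → i + 1 ≤ n - 1 →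
      T i * T (i + 1) * T i = T (i + 1) * T i * T (i + 1) := by
    intro i h1 h2
    exact Units.ext (by simpa using hbraid i h1 h2)
  have brsq : ∀ i, 1 ≤ i → i + 1 ≤ n - 1 →
      T (i + 1) * (T i * T i) * (T (i + 1))⁻¹ = (T i)⁻¹ * (T (i + 1) * T (i + 1)) * T i := by
    intro i h1 h2
    have h3 : T (i + 1) * T i * (T (i + 1))⁻¹ = (T i)⁻¹ * T (i + 1) * T i := by
      apply mul_left_cancel (a := T i)
      calc T i * (T (i + 1) * T i * (T (i + 1))⁻¹)
          = (T i * T (i + 1) * T i) * (T (i + 1))⁻¹ := by group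
        _ = (T (i + 1) * T i * T (i + 1)) * (T (i + 1))⁻¹ := by rw [brU i h1 h2]
        _ = T i * ((T i)⁻¹ * T (i + 1) * T i) := by group
    calc T (i + 1) * (T i * T i) * (T (i + 1))⁻¹
        = (T (i + 1) * T i * (T (i + 1))⁻¹) * (T (i + 1) * T i * (T (i + 1))⁻¹) := by group
      _ = ((T i)⁻¹ * T (i + 1) * T i) * ((T i)⁻¹ * T (i + 1) * T i) := by rw [h3]
      _ = (T i)⁻¹ * (T (i + 1) * T (i + 1)) * T i := by group
  -- `T (m+1)` conjugates `Dx m` to `Dx (m+1)`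
  have Dstep : ∀ m, 1 ≤ m → m + 1 ≤ n - 1 →
      T (m + 1) * Dx T m * (T (m + 1))⁻¹ = Dx T (m + 1) := by
    intro m h1 h2
    have hc : Commute (T (m + 1)) (descT T 1 m) := by
      apply cDesc
      intro i hi1 hi2
      exact (cTTU i (m + 1) hi1 (by omega) (by omega) h2 (by omega)).symm
    have h3 : T (m + 1) * (descT T 1 m)⁻¹ = (descT T 1 m)⁻¹ * T (m + 1) :=
      (hc.inv_right).eq
    have h4 : descT T 1 m * (T (m + 1))⁻¹ = (T (m + 1))⁻¹ * descT T 1 m :=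
      (hc.symm.inv_right).eq
    calc T (m + 1) * Dx T m * (T (m + 1))⁻¹
        = (T (m + 1) * (descT T 1 m)⁻¹) * (T m * T m) * (descT T 1 m * (T (m + 1))⁻¹) := by
          unfold Dx; group
      _ = ((descT T 1 m)⁻¹ * T (m + 1)) * (T m * T m) * ((T (m + 1))⁻¹ * descT T 1 m) := by
          rw [h3, h4]
      _ = (descT T 1 m)⁻¹ * (T (m + 1) * (T m * T m) * (T (m + 1))⁻¹) * descT T 1 m := by
          group
      _ = (descT T 1 m)⁻¹ * ((T m)⁻¹ * (T (m + 1) * T (m + 1)) * T m) * descT T 1 m := by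
          rw [brsq m h1 h2]
      _ = Dx T (m + 1) := by
          unfold Dx
          rw [descT_succ T 1 m h1, mul_inv_rev]
          group

  -- ## the key commutation `Vx m * Cx m = Dx m * Vx m`
  have N : ∀ m, 1 ≤ m → m ≤ n - 1 →
      (Vx X m : A) * (Cx T m : A) = (Dx T m : A) * (Vx X m : A) := by
    intro m hm
    induction m, hm using Nat.le_induction with
    | base =>
      intro _
      rw [Vx_one, Cx_one, Dx_one]
      simp
    | succ m hm IH =>
      intro hm2
      have hIH := IH (by omega)
      have cXC : Commute (X (m + 2)) (Cx T m) := by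
        have hx : ∀ i, 2 ≤ i → i < m + 1 → Commute (X (m + 2)) (T i) := by
          intro i hi1 hi2
          exact (cTXU i (m + 2) (by omega) (by omega) (by omega) (by omega)
            (by omega) (by omega)).symm
        have h1 : Commute (X (m + 2)) (ascT T 2 (m + 1)) := cAsc _ _ _ hx
        have h2 : Commute (X (m + 2)) (T 1) :=
          (cTXU 1 (m + 2) le_rfl (by omega) (by omega) (by omega) (by omega)
            (by omega)).symm
        unfold Cx
        exact (h1.inv_right.mul_right (h2.mul_right h2)).mul_right h1
      have cTV : Commute (T (m + 1)) (Vx X m) := by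
        apply cVx
        intro j hj1 hj2
        exact cTXU (m + 1) j (by omega) (by omega) (by omega) (by omega) (by omega) (by omega)
      have cXCa : (X (m + 2) : A) * (Cx T m : A) = (Cx T m : A) * (X (m + 2) : A) := by
        have := congrArg Units.val cXC.eq
        simpa using this
      have cTVa : (Vx X m : A) * (T (m + 1) : A) = (T (m + 1) : A) * (Vx X m : A) := by
        have := congrArg Units.val cTV.symm.eq
        simpa using this
      have cTVinva : (Vx X m : A) * (↑(T (m + 1))⁻¹ : A) = (↑(T (m + 1))⁻¹ : A) * (Vx X m : A) := by
        have := congrArg Units.val cTV.inv_left.symm.eq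
        simpa using this
      calc (Vx X (m + 1) : A) * (Cx T (m + 1) : A)
          = ((Vx X m : A) * ((X (m + 1) : A) * (↑(T (m + 1))⁻¹ : A))) *
              ((Cx T m : A) * (T (m + 1) : A)) := by
            rw [Vx_succ X m hm, Cx_succ T m hm]
            simp only [Units.val_mul, mul_assoc]
        _ = ((Vx X m : A) * (t⁻¹ • ((T (m + 1) : A) * (X (m + 2) : A)))) *
              ((Cx T m : A) * (T (m + 1) : A)) := by
            rw [E1inv (m + 1) (by omega) (by omega)]
        _ = t⁻¹ • (((Vx X m : A) * (T (m + 1) : A)) * (((X (m + 2) : A) * (Cx T m : A)) *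
              (T (m + 1) : A))) := by
            simp only [mul_smul_comm, smul_mul_assoc, mul_assoc]
        _ = t⁻¹ • (((T (m + 1) : A) * (Vx X m : A)) * (((Cx T m : A) * (X (m + 2) : A)) *
              (T (m + 1) : A))) := by
            rw [cTVa, cXCa]
        _ = t⁻¹ • ((T (m + 1) : A) * (((Vx X m : A) * (Cx T m : A)) *
              ((X (m + 2) : A) * (T (m + 1) : A)))) := by
            simp only [mul_assoc]
        _ = t⁻¹ • ((T (m + 1) : A) * (((Dx T m : A) * (Vx X m : A)) *
              (t • ((↑(T (m + 1))⁻¹ : A) * (X (m + 1) : A))))) := by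
            rw [hIH, E2 (m + 1) (by omega) (by omega)]
        _ = (t⁻¹ * t) • (((T (m + 1) : A) * (Dx T m : A)) * (((Vx X m : A) *
              (↑(T (m + 1))⁻¹ : A)) * (X (m + 1) : A))) := by
            simp only [mul_smul_comm, smul_smul, mul_assoc]
        _ = (t⁻¹ * t) • (((T (m + 1) : A) * (Dx T m : A)) * (((↑(T (m + 1))⁻¹ : A) *
              (Vx X m : A)) * (X (m + 1) : A))) := by
            rw [cTVinva]
        _ = ((T (m + 1) * Dx T m * (T (m + 1))⁻¹ : Aˣ) : A) * ((Vx X (m + 1) : Aˣ) : A) := by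
            rw [inv_mul_cancel₀ ht, one_smul, Vx_succ X m hm]
            simp only [Units.val_mul, mul_assoc]
        _ = (Dx T (m + 1) : A) * (Vx X (m + 1) : A) := by rw [Dstep m hm hm2]
  -- ## crossing `Y 1` past `X (k+1)`
  have Wlem : ∀ k, 1 ≤ k → k ≤ n - 1 →
      t • ((X (k + 1) : A) * (Y 1 : A)) = (Y 1 : A) * (Cx T k : A) * (X (k + 1) : A) := by
    intro k hk
    induction k, hk using Nat.le_induction with
    | base =>
      intro _
      rw [Cx_one]
      symm
      calc (Y 1 : A) * ((T 1 * T 1 : Aˣ) : A) * (X 2 : A)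
          = (Y 1 : A) * (T 1 : A) * ((T 1 : A) * (X 2 : A)) := by
            simp only [Units.val_mul, mul_assoc]
        _ = (Y 1 : A) * (T 1 : A) * (t • ((X 1 : A) * (↑(T 1)⁻¹ : A))) := by
            rw [E1 1 le_rfl (by omega)]
        _ = t • ((Y 1 : A) * (T 1 : A) * (X 1 : A) * (↑(T 1)⁻¹ : A)) := by
            simp only [mul_smul_comm, mul_assoc]
        _ = t • ((X 2 : A) * (Y 1 : A) * (T 1 : A) * (↑(T 1)⁻¹ : A)) := by rw [hXY]
        _ = t • ((X 2 : A) * (Y 1 : A)) := by rw [Units.mul_inv_cancel_right]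
    | succ k hk IH =>
      intro hk2
      have hIH := IH (by omega)
      have cY : (Y 1 : A) * (↑(T (k + 1))⁻¹ : A) = (↑(T (k + 1))⁻¹ : A) * (Y 1 : A) := by
        have := congrArg Units.val ((cYTU (k + 1) (by omega) hk2).inv_right).eq
        simpa using this
      symm
      calc (Y 1 : A) * (Cx T (k + 1) : A) * (X (k + 2) : A)
          = ((Y 1 : A) * (↑(T (k + 1))⁻¹ : A)) * ((Cx T k : A) *
              ((T (k + 1) : A) * (X (k + 2) : A))) := by
            rw [Cx_succ T k hk]
            simp only [Units.val_mul, mul_assoc]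
        _ = ((Y 1 : A) * (↑(T (k + 1))⁻¹ : A)) * ((Cx T k : A) *
              (t • ((X (k + 1) : A) * (↑(T (k + 1))⁻¹ : A)))) := by
            rw [E1 (k + 1) (by omega) hk2]
        _ = t • ((↑(T (k + 1))⁻¹ : A) * ((Y 1 : A) * (Cx T k : A) * (X (k + 1) : A) *
              (↑(T (k + 1))⁻¹ : A))) := by
            rw [cY]
            simp only [mul_smul_comm, mul_assoc]
        _ = t • ((↑(T (k + 1))⁻¹ : A) * ((t • ((X (k + 1) : A) * (Y 1 : A))) *
              (↑(T (k + 1))⁻¹ : A))) := by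
            rw [← hIH]
        _ = (t * t) • ((↑(T (k + 1))⁻¹ : A) * ((X (k + 1) : A) * ((Y 1 : A) *
              (↑(T (k + 1))⁻¹ : A)))) := by
            simp only [mul_smul_comm, smul_mul_assoc, smul_smul, mul_assoc]
        _ = (t * t) • ((↑(T (k + 1))⁻¹ : A) * ((X (k + 1) : A) * ((↑(T (k + 1))⁻¹ : A) *
              (Y 1 : A)))) := by
            rw [cY]
        _ = (t * t) • (((↑(T (k + 1))⁻¹ : A) * (X (k + 1) : A) * (↑(T (k + 1))⁻¹ : A)) *
              (Y 1 : A)) := by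
            simp only [mul_assoc]
        _ = (t * t * t⁻¹) • ((X (k + 2) : A) * (Y 1 : A)) := by
            rw [hTXTp (k + 1) (by omega) hk2]
            simp only [smul_mul_assoc, smul_smul]
        _ = t • ((X (k + 2) : A) * (Y 1 : A)) := by rw [mul_inv_cancel_right₀ ht]
  -- ## moving `Y 1` past the whole product `X 2 ⋯ X m`
  have BD : ∀ m : ℕ, 1 ≤ m →
      ascT T 1 m * descT T 1 m * Dx T m = ascT T 1 (m + 1) * descT T 1 (m + 1) := by
    intro m hm
    unfold Dx
    rw [ascT_succ T 1 m hm, descT_succ T 1 m hm]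
    group
  have M : ∀ m, 2 ≤ m → m ≤ n →
      (t ^ (m - 1)) • ((Vx X m : A) * (Y 1 : A)) =
        (Y 1 : A) * ((ascT T 1 m * descT T 1 m : Aˣ) : A) * (Vx X m : A) := by
    intro m hm
    induction m, hm using Nat.le_induction with
    | base =>
      intro _
      have h1 : ascT T 1 2 * descT T 1 2 = T 1 * T 1 := by
        simp [ascT, descT]
      rw [Vx_two, h1, pow_one]
      have := Wlem 1 le_rfl (by omega)
      rwa [Cx_one] at this
    | succ m hm IH =>
      intro hm2
      have hIH := IH (by omega)
      have hW := Wlem m (by omega) (by omega)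
      have hN := N m (by omega) (by omega)
      have hpow : t ^ (m + 1 - 1) = t ^ (m - 1) * t := by
        rw [show m + 1 - 1 = (m - 1) + 1 by omega, pow_succ]
      calc (t ^ (m + 1 - 1)) • ((Vx X (m + 1) : A) * (Y 1 : A))
          = (t ^ (m - 1)) • ((Vx X m : A) * (t • ((X (m + 1) : A) * (Y 1 : A)))) := by
            rw [hpow, Vx_succ X m (by omega)]
            simp only [Units.val_mul, mul_smul_comm, smul_smul, mul_assoc]
        _ = (t ^ (m - 1)) • ((Vx X m : A) * ((Y 1 : A) * (Cx T m : A) * (X (m + 1) : A))) := by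
            rw [hW]
        _ = ((t ^ (m - 1)) • ((Vx X m : A) * (Y 1 : A))) * ((Cx T m : A) * (X (m + 1) : A)) := by
            simp only [smul_mul_assoc, mul_assoc]
        _ = ((Y 1 : A) * ((ascT T 1 m * descT T 1 m : Aˣ) : A)) *
              (((Vx X m : A) * (Cx T m : A)) * (X (m + 1) : A)) := by
            rw [hIH]
            simp only [mul_assoc]
        _ = ((Y 1 : A) * ((ascT T 1 m * descT T 1 m : Aˣ) : A)) *
              (((Dx T m : A) * (Vx X m : A)) * (X (m + 1) : A)) := by
            rw [hN]
        _ = (Y 1 : A) * ((ascT T 1 m * descT T 1 m * Dx T m : Aˣ) : A) *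
              ((Vx X (m + 1) : Aˣ) : A) := by
            rw [Vx_succ X m (by omega)]
            simp only [Units.val_mul, mul_assoc]
        _ = (Y 1 : A) * ((ascT T 1 (m + 1) * descT T 1 (m + 1) : Aˣ) : A) *
              (Vx X (m + 1) : A) := by
            rw [BD m (by omega)]
  -- ## the master relation `Y 1 * X 1 = q t^{1-n} X 1 Y 1 (T 1 ⋯ T (n-1))(T (n-1) ⋯ T 1)`
  have prodsplit : ((List.range' 1 n).map (fun i => (X i : A))).prod =
      (X 1 : A) * ((Vx X n : Aˣ) : A) := by
    calc ((List.range' 1 n).map (fun i => (X i : A))).prod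
        = ((List.range' 1 ((n - 1) + 1)).map (fun i => (X i : A))).prod := by
          rw [Nat.sub_add_cancel (by omega)]
      _ = (X 1 : A) * ((List.range' 2 (n - 1)).map (fun i => (X i : A))).prod := by
          rw [List.range'_succ]
          simp
      _ = (X 1 : A) * ((Vx X n : Aˣ) : A) := by
          rw [show ((Vx X n : Aˣ) : A) = ((List.range' 2 (n - 1)).map (fun i => (X i : A))).prod
            from coe_list_prod X _]
  have hVAY : (Vx X n : A) * (Y 1 : A) = (t⁻¹ ^ (n - 1)) •
      ((Y 1 : A) * ((ascT T 1 n * descT T 1 n : Aˣ) : A) * (Vx X n : A)) := by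
    rw [← M n hn le_rfl, smul_smul, inv_pow, inv_mul_cancel₀ (pow_ne_zero _ ht), one_smul]
  have Star : (Y 1 : A) * (X 1 : A) = (q * t⁻¹ ^ (n - 1)) •
      ((X 1 : A) * (Y 1 : A) * ((ascT T 1 n * descT T 1 n : Aˣ) : A)) := by
    apply cancelu (Vx X n)
    have h0 := hYX
    rw [prodsplit] at h0
    calc (Y 1 : A) * (X 1 : A) * ((Vx X n : Aˣ) : A)
        = (Y 1 : A) * ((X 1 : A) * ((Vx X n : Aˣ) : A)) := by rw [mul_assoc]
      _ = q • ((X 1 : A) * ((Vx X n : Aˣ) : A) * (Y 1 : A)) := h0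
      _ = q • ((X 1 : A) * (((Vx X n : Aˣ) : A) * (Y 1 : A))) := by rw [mul_assoc]
      _ = q • ((X 1 : A) * ((t⁻¹ ^ (n - 1)) • ((Y 1 : A) *
            ((ascT T 1 n * descT T 1 n : Aˣ) : A) * ((Vx X n : Aˣ) : A)))) := by rw [hVAY]
      _ = ((q * t⁻¹ ^ (n - 1)) • ((X 1 : A) * (Y 1 : A) *
            ((ascT T 1 n * descT T 1 n : Aˣ) : A))) * ((Vx X n : Aˣ) : A) := by
          simp only [mul_smul_comm, smul_smul, smul_mul_assoc, mul_assoc]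
  -- ## collapsing `T 1 ⋯ T (r-1) * X r`
  have Lred : ∀ s, 1 ≤ s → s ≤ n →
      ((ascT T 1 s : Aˣ) : A) * (X s : A) =
        (t ^ (s - 1)) • ((X 1 : A) * ((descT T 1 s)⁻¹ : Aˣ)) := by
    intro s hs
    induction s, hs using Nat.le_induction with
    | base =>
      intro _
      simp [ascT_same, descT_same]
    | succ s hs IH =>
      intro hs2
      have hIH := IH (by omega)
      have hpow : t ^ (s + 1 - 1) = t * t ^ (s - 1) := by
        rw [show s + 1 - 1 = (s - 1) + 1 by omega, pow_succ]
        ring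
      calc ((ascT T 1 (s + 1) : Aˣ) : A) * (X (s + 1) : A)
          = ((ascT T 1 s : Aˣ) : A) * ((T s : A) * (X (s + 1) : A)) := by
            rw [ascT_succ T 1 s hs]
            simp only [Units.val_mul, mul_assoc]
        _ = ((ascT T 1 s : Aˣ) : A) * (t • ((X s : A) * (↑(T s)⁻¹ : A))) := by
            rw [E1 s hs (by omega)]
        _ = t • ((((ascT T 1 s : Aˣ) : A) * (X s : A)) * (↑(T s)⁻¹ : A)) := by
            simp only [mul_smul_comm, mul_assoc]
        _ = t • (((t ^ (s - 1)) • ((X 1 : A) * ((descT T 1 s)⁻¹ : Aˣ))) * (↑(T s)⁻¹ : A)) := by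
            rw [hIH]
        _ = (t ^ (s + 1 - 1)) • ((X 1 : A) * (((descT T 1 s)⁻¹ : Aˣ) * (↑(T s)⁻¹ : A))) := by
            rw [hpow]
            simp only [smul_mul_assoc, smul_smul, mul_assoc]
        _ = (t ^ (s + 1 - 1)) • ((X 1 : A) * ((descT T 1 (s + 1))⁻¹ : Aˣ)) := by
            rw [descT_succ T 1 s hs, mul_inv_rev]
            simp only [Units.val_mul, mul_assoc]
  -- ## assembling everything
  have hsplitD : descT T 1 n = descT T r n * descT T 1 r := descT_split T 1 r n hr1 (by omega)
  have hsc : t ^ (r - 1) * (q * t⁻¹ ^ (n - 1)) = q * t⁻¹ ^ (n - r) := by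
    rw [show n - 1 = (r - 1) + (n - r) by omega, pow_add]
    rw [show t ^ (r - 1) * (q * (t⁻¹ ^ (r - 1) * t⁻¹ ^ (n - r))) =
      q * ((t ^ (r - 1) * t⁻¹ ^ (r - 1)) * t⁻¹ ^ (n - r)) from by ring]
    rw [← mul_pow, mul_inv_cancel₀ ht, one_pow, one_mul]
  calc ((Y 1 * ascT T 1 n : Aˣ) : A) * ((ascT T r n)⁻¹ : Aˣ) * (X r : A)
      = (Y 1 : A) * (((ascT T 1 r : Aˣ) : A) * (X r : A)) := by
        rw [ascT_split T 1 r n hr1 (by omega)]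
        simp only [Units.val_mul, mul_assoc, Units.mul_inv_cancel_left]
    _ = (Y 1 : A) * ((t ^ (r - 1)) • ((X 1 : A) * ((descT T 1 r)⁻¹ : Aˣ))) := by
        rw [Lred r hr1 (by omega)]
    _ = (t ^ (r - 1)) • (((Y 1 : A) * (X 1 : A)) * ((descT T 1 r)⁻¹ : Aˣ)) := by
        simp only [mul_smul_comm, mul_assoc]
    _ = (t ^ (r - 1)) • (((q * t⁻¹ ^ (n - 1)) • ((X 1 : A) * (Y 1 : A) *
          ((ascT T 1 n * descT T 1 n : Aˣ) : A))) * ((descT T 1 r)⁻¹ : Aˣ)) := by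
        rw [Star]
    _ = (t ^ (r - 1) * (q * t⁻¹ ^ (n - 1))) • ((X 1 : A) * ((Y 1 : A) *
          (((ascT T 1 n : Aˣ) : A) * (((descT T 1 n : Aˣ) : A) *
          (((descT T 1 r)⁻¹ : Aˣ) : A))))) := by
        simp only [smul_mul_assoc, smul_smul, Units.val_mul, mul_assoc]
    _ = (q * t⁻¹ ^ (n - r)) • ((X 1 : A) * ((Y 1 : A) *
          (((ascT T 1 n : Aˣ) : A) * ((descT T r n : Aˣ) : A)))) := by
        rw [hsc, hsplitD]
        simp only [Units.val_mul, mul_assoc, Units.mul_inv, Units.mul_inv_cancel_right, mul_one]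
    _ = (q * t⁻¹ ^ (n - r)) • ((X 1 : A) * ((Y 1 * ascT T 1 n : Aˣ) : A) *
          (descT T r n : A)) := by
        simp only [Units.val_mul, mul_assoc]
end
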